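/- Let L, L* ∈ ℝ^{n₁×n₂} both have rank r, and suppose ‖L − L*‖_F = a σ_r(L*) with a ≤ 1. Then ‖(L − L*) − P_{T_{L*}}(L − L*)‖_F ≤ (a/2) ‖L − L*‖_F, where P_{T_{L*}} is the projection onto the tangent space of the rank-r manifold at L*. -/

import Mathlib

open Matrix MeasureTheory ProbabilityTheory Filter
open scoped BigOperators ENNReal NNReal

noncomputable section

namespace RPCA

variable {n₁ n₂ r : ℕ}

/-- Frobenius norm of a real matrix. -/
def frob (A : Matrix (Fin n₁) (Fin n₂) ℝ) : ℝ :=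
  Real.sqrt (∑ i, ∑ j, (A i j) ^ 2)

/-- Frobenius inner product of two real matrices. -/
def finner (A B : Matrix (Fin n₁) (Fin n₂) ℝ) : ℝ :=
  ∑ i, ∑ j, A i j * B i j

/-- Spectral norm (operator norm) of a real matrix. -/
def spec (A : Matrix (Fin n₁) (Fin n₂) ℝ) : ℝ :=
  sSup {c | ∃ v : Fin n₂ → ℝ, (∑ j, (v j) ^ 2) = 1 ∧
    c = Real.sqrt (∑ i, (∑ j, A i j * v j) ^ 2)}

/-- Smallest singular value of a square matrix. -/
def sigmaMin (A : Matrix (Fin r) (Fin r) ℝ) : ℝ :=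
  sInf {c | ∃ v : Fin r → ℝ, (∑ k, (v k) ^ 2) = 1 ∧
    c = Real.sqrt (∑ i, (∑ k, A i k * v k) ^ 2)}

/-- The γ-th percentile (counting the fraction γ from the largest) of a multiset of reals. -/
def percentile (γ : ℝ) (s : Multiset ℝ) : ℝ :=
  (s.sort (· ≤ ·)).getD (s.card - ⌈γ * s.card⌉₊) 0

/-- Absolute values of the entries of row `i`. -/
def rowAbs (A : Matrix (Fin n₁) (Fin n₂) ℝ) (i : Fin n₁) : Multiset ℝ :=
  (Finset.univ : Finset (Fin n₂)).val.map fun j => |A i j|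

/-- Absolute values of the entries of column `j`. -/
def colAbs (A : Matrix (Fin n₁) (Fin n₂) ℝ) (j : Fin n₂) : Multiset ℝ :=
  (Finset.univ : Finset (Fin n₁)).val.map fun i => |A i j|

/-- The hard-thresholding operator `F_γ`: entries that are simultaneously above the γ-th
percentile of absolute values of their row and of their column are set to zero. -/
def hardThresh (γ : ℝ) (A : Matrix (Fin n₁) (Fin n₂) ℝ) : Matrix (Fin n₁) (Fin n₂) ℝ :=
  Matrix.of fun i j =>
    if percentile γ (rowAbs A i) < |A i j| ∧ percentile γ (colAbs A j) < |A i j| then 0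
    else A i j

/-- Absolute values of the observed entries of row `i`. -/
def rowAbsObs (Φ : Finset (Fin n₁ × Fin n₂)) (A : Matrix (Fin n₁) (Fin n₂) ℝ) (i : Fin n₁) :
    Multiset ℝ :=
  ((Φ.filter fun q => q.1 = i).val).map fun q => |A q.1 q.2|

/-- Absolute values of the observed entries of column `j`. -/
def colAbsObs (Φ : Finset (Fin n₁ × Fin n₂)) (A : Matrix (Fin n₁) (Fin n₂) ℝ) (j : Fin n₂) :
    Multiset ℝ :=
  ((Φ.filter fun q => q.2 = j).val).map fun q => |A q.1 q.2|

/-- Partially observed thresholding operator `F̃_γ`: `F̃_ij A = A i j` if `|A i j|` exceeds the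
γ-th percentile of absolute values of observed entries in both its row and its column,
and `0` otherwise. -/
def hardThreshObs (γ : ℝ) (Φ : Finset (Fin n₁ × Fin n₂)) (A : Matrix (Fin n₁) (Fin n₂) ℝ) :
    Matrix (Fin n₁) (Fin n₂) ℝ :=
  Matrix.of fun i j =>
    if percentile γ (rowAbsObs Φ A i) < |A i j| ∧ percentile γ (colAbsObs Φ A j) < |A i j| then
      A i j
    else 0

/-- `P_Φ`: zero out the entries outside the observed set `Φ`. -/
def projObs (Φ : Finset (Fin n₁ × Fin n₂)) (A : Matrix (Fin n₁) (Fin n₂) ℝ) :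
    Matrix (Fin n₁) (Fin n₂) ℝ :=
  Matrix.of fun i j => if (i, j) ∈ Φ then A i j else 0

/-- The sparsity class `S_{γ*}`: at most `γ* n₂` nonzero entries in each row and at most
`γ* n₁` nonzero entries in each column. -/
def SparseSet (γs : ℝ) (A : Matrix (Fin n₁) (Fin n₂) ℝ) : Prop :=
  (∀ i, (((Finset.univ : Finset (Fin n₂)).filter fun j => A i j ≠ 0).card : ℝ) ≤ γs * n₂) ∧
  (∀ j, (((Finset.univ : Finset (Fin n₁)).filter fun i => A i j ≠ 0).card : ℝ) ≤ γs * n₁)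

/-- Thin SVD `L = U (diagonal s) Vᵀ` with orthonormal `U, V` and positive decreasing
singular values `s`; this encodes that `L` has rank exactly `r`. -/
def IsThinSVD (L : Matrix (Fin n₁) (Fin n₂) ℝ) (U : Matrix (Fin n₁) (Fin r) ℝ)
    (s : Fin r → ℝ) (V : Matrix (Fin n₂) (Fin r) ℝ) : Prop :=
  Uᵀ * U = 1 ∧ Vᵀ * V = 1 ∧ Antitone s ∧ (∀ k, 0 < s k) ∧ L = U * Matrix.diagonal s * Vᵀ

/-- μ-incoherence of the orthonormal SVD factors `U, V`: every row of `U` has Euclidean norm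
at most `√(μ r / n₁)` and every row of `V` has Euclidean norm at most `√(μ r / n₂)`. -/
def Incoherent (μc : ℝ) (U : Matrix (Fin n₁) (Fin r) ℝ) (V : Matrix (Fin n₂) (Fin r) ℝ) :
    Prop :=
  (∀ i, Real.sqrt (∑ k, (U i k) ^ 2) ≤ Real.sqrt (μc * r / n₁)) ∧
  (∀ j, Real.sqrt (∑ k, (V j k) ^ 2) ≤ Real.sqrt (μc * r / n₂))

/-- Tangent-space projection `P_{T_X} D = UUᵀD + DVVᵀ − UUᵀDVVᵀ` at a rank-r point with
orthonormal factors `U, V`. -/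
def tangentProj (U : Matrix (Fin n₁) (Fin r) ℝ) (V : Matrix (Fin n₂) (Fin r) ℝ)
    (D : Matrix (Fin n₁) (Fin n₂) ℝ) : Matrix (Fin n₁) (Fin n₂) ℝ :=
  U * Uᵀ * D + D * (V * Vᵀ) - U * Uᵀ * D * (V * Vᵀ)

/-- `Z` is a best rank-r approximation of `M` in Frobenius norm. -/
def IsBestRankApprox (r : ℕ) (M Z : Matrix (Fin n₁) (Fin n₂) ℝ) : Prop :=
  Z.rank ≤ r ∧ ∀ W : Matrix (Fin n₁) (Fin n₂) ℝ, W.rank ≤ r → frob (M - Z) ≤ frob (M - W)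

/-- Orthographic retraction formula `M V (Uᵀ M V)⁻¹ Uᵀ M` where `M = X + δ`. -/
def orthoRetract (U : Matrix (Fin n₁) (Fin r) ℝ) (V : Matrix (Fin n₂) (Fin r) ℝ)
    (M : Matrix (Fin n₁) (Fin n₂) ℝ) : Matrix (Fin n₁) (Fin n₂) ℝ :=
  M * V * (Uᵀ * M * V)⁻¹ * (Uᵀ * M)

/-- `Lnext` is obtained from `Lk` by applying either the projective or the orthographic
retraction (for the rank-r manifold) to the tangent vector `δ` at `Lk`. -/
def IsRetractUpdate (r : ℕ) (Lk δ Lnext : Matrix (Fin n₁) (Fin n₂) ℝ) : Prop :=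
  IsBestRankApprox r (Lk + δ) Lnext ∨
  ∃ (U : Matrix (Fin n₁) (Fin r) ℝ) (s : Fin r → ℝ) (V : Matrix (Fin n₂) (Fin r) ℝ),
    IsThinSVD Lk U s V ∧ Lnext = orthoRetract U V (Lk + δ)

/-- One step of manifold gradient descent with the fully observed thresholded gradient:
`Lnext = R_{Lk}(−η P_{T_{Lk}} F_γ(Lk − Y))`. -/
def IsGradStep (γ η : ℝ) (r : ℕ) (Y Lk Lnext : Matrix (Fin n₁) (Fin n₂) ℝ) : Prop :=
  ∃ (U : Matrix (Fin n₁) (Fin r) ℝ) (s : Fin r → ℝ) (V : Matrix (Fin n₂) (Fin r) ℝ),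
    IsThinSVD Lk U s V ∧
    IsRetractUpdate r Lk (-(η • tangentProj U V (hardThresh γ (Lk - Y)))) Lnext

/-- One step of manifold gradient descent with the partially observed thresholded gradient:
`Lnext = R_{Lk}(−η P_{T_{Lk}} F̃_γ(Lk − Y))`. -/
def IsGradStepObs (γ η : ℝ) (r : ℕ) (Φ : Finset (Fin n₁ × Fin n₂))
    (Y Lk Lnext : Matrix (Fin n₁) (Fin n₂) ℝ) : Prop :=
  ∃ (U : Matrix (Fin n₁) (Fin r) ℝ) (s : Fin r → ℝ) (V : Matrix (Fin n₂) (Fin r) ℝ),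
    IsThinSVD Lk U s V ∧
    IsRetractUpdate r Lk (-(η • tangentProj U V (hardThreshObs γ Φ (Lk - Y)))) Lnext

end RPCA

namespace RPCAAux
open RPCA

variable {m n p q : ℕ}

lemma frob_nonneg (A : Matrix (Fin m) (Fin n) ℝ) : 0 ≤ frob A := Real.sqrt_nonneg _

lemma frob_sq (A : Matrix (Fin m) (Fin n) ℝ) : frob A ^ 2 = ∑ i, ∑ j, (A i j)^2 :=
  Real.sq_sqrt (by positivity)

lemma frob_neg (A : Matrix (Fin m) (Fin n) ℝ) : frob (-A) = frob A := by
  simp [frob]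

lemma frob_transpose (A : Matrix (Fin m) (Fin n) ℝ) : frob Aᵀ = frob A := by
  unfold frob
  rw [Finset.sum_comm]
  rfl

lemma le_of_sq_le_sq {a b : ℝ} (hb : 0 ≤ b) (h : a^2 ≤ b^2) (ha : 0 ≤ a) : a ≤ b := by
  nlinarith

lemma frob_mul_le (A : Matrix (Fin m) (Fin n) ℝ) (B : Matrix (Fin n) (Fin p) ℝ) :
    frob (A * B) ≤ frob A * frob B := by
  have h : frob (A * B) ^ 2 ≤ (frob A * frob B)^2 := by
    rw [mul_pow, frob_sq, frob_sq, frob_sq]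
    calc ∑ i, ∑ j, ((A * B) i j)^2
        ≤ ∑ i, ∑ j, (∑ k, (A i k)^2) * (∑ k, (B k j)^2) := by
          refine Finset.sum_le_sum fun i _ => Finset.sum_le_sum fun j _ => ?_
          rw [Matrix.mul_apply]
          exact Finset.sum_mul_sq_le_sq_mul_sq _ _ _
      _ = (∑ i, ∑ k, (A i k)^2) * (∑ j, ∑ k, (B k j)^2) := by
          rw [Finset.sum_mul]
          refine Finset.sum_congr rfl fun i _ => ?_
          rw [Finset.mul_sum]
      _ = (∑ i, ∑ k, (A i k)^2) * (∑ k, ∑ j, (B k j)^2) := by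
          congr 1
          exact Finset.sum_comm
  exact le_of_sq_le_sq (mul_nonneg (frob_nonneg _) (frob_nonneg _)) h (frob_nonneg _)

/-- right multiplication by `Vᵀ` with orthonormal columns preserves frobenius norm -/
lemma frob_mul_orthright (C : Matrix (Fin m) (Fin q) ℝ) (V : Matrix (Fin n) (Fin q) ℝ)
    (hV : Vᵀ * V = 1) : frob (C * Vᵀ) = frob C := by
  unfold frob
  congr 1
  refine Finset.sum_congr rfl fun i _ => ?_
  have : ∀ j, (C * Vᵀ) i j = ∑ k, C i k * V j k := by
    intro j; rw [Matrix.mul_apply]; rfl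
  calc ∑ j, ((C * Vᵀ) i j)^2
      = ∑ j, ∑ k, ∑ l, (C i k * C i l) * (V j k * V j l) := by
        refine Finset.sum_congr rfl fun j _ => ?_
        rw [this j, sq, Finset.sum_mul_sum]
        refine Finset.sum_congr rfl fun k _ => Finset.sum_congr rfl fun l _ => by ring
    _ = ∑ k, ∑ l, (C i k * C i l) * ((Vᵀ * V) k l) := by
        rw [Finset.sum_comm]
        refine Finset.sum_congr rfl fun k _ => ?_
        rw [Finset.sum_comm]
        refine Finset.sum_congr rfl fun l _ => ?_
        rw [Matrix.mul_apply, Finset.mul_sum]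
        rfl
    _ = ∑ k, (C i k)^2 := by
        rw [hV]
        refine Finset.sum_congr rfl fun k _ => ?_
        rw [Finset.sum_eq_single k]
        · simp [Matrix.one_apply, sq]
        · intro l _ hl; simp [Matrix.one_apply, Ne.symm hl]
        · intro h; exact absurd (Finset.mem_univ k) h

lemma frob_mul_orthleft (C : Matrix (Fin q) (Fin n) ℝ) (U : Matrix (Fin m) (Fin q) ℝ)
    (hU : Uᵀ * U = 1) : frob (U * C) = frob C := by
  rw [← frob_transpose (U * C), Matrix.transpose_mul, frob_mul_orthright Cᵀ U hU,
    frob_transpose]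

lemma finner_eq_trace (A B : Matrix (Fin m) (Fin n) ℝ) :
    finner A B = Matrix.trace (Aᵀ * B) := by
  unfold finner Matrix.trace
  rw [Finset.sum_comm]
  refine Finset.sum_congr rfl fun j _ => ?_
  simp [Matrix.diag, Matrix.mul_apply, Matrix.transpose_apply]

lemma frob_add_sq (A B : Matrix (Fin m) (Fin n) ℝ) :
    frob (A + B) ^ 2 = frob A ^2 + 2 * finner A B + frob B ^2 := by
  rw [frob_sq, frob_sq, frob_sq]
  unfold finner
  rw [Finset.mul_sum, ← Finset.sum_add_distrib, ← Finset.sum_add_distrib]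
  refine Finset.sum_congr rfl fun i _ => ?_
  rw [Finset.mul_sum, ← Finset.sum_add_distrib, ← Finset.sum_add_distrib]
  refine Finset.sum_congr rfl fun j _ => ?_
  simp [Matrix.add_apply]; ring

/-- Pythagoras for a symmetric idempotent acting on columns. -/
lemma pyth_col (M : Matrix (Fin m) (Fin n) ℝ) (Q : Matrix (Fin n) (Fin n) ℝ)
    (hs : Qᵀ = Q) (hi : Q * Q = Q) :
    frob M ^2 = frob (M*Q)^2 + frob (M*(1-Q))^2 := by
  have hM : M = M*Q + M*(1-Q) := by rw [Matrix.mul_sub, Matrix.mul_one]; abel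
  have hcross : finner (M*Q) (M*(1-Q)) = 0 := by
    rw [finner_eq_trace, Matrix.transpose_mul, hs]
    have : Q * Mᵀ * (M * (1 - Q)) = Q * (Mᵀ * M) * (1 - Q) := by
      rw [Matrix.mul_assoc, Matrix.mul_assoc, Matrix.mul_assoc]
    rw [this, Matrix.trace_mul_comm]
    have : (1 - Q) * (Q * (Mᵀ * M)) = ((1 - Q) * Q) * (Mᵀ * M) := by
      rw [Matrix.mul_assoc]
    rw [this]
    have : (1 - Q) * Q = 0 := by rw [Matrix.sub_mul, Matrix.one_mul, hi, sub_self]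
    rw [this, Matrix.zero_mul, Matrix.trace_zero]
  calc frob M ^2 = frob (M*Q + M*(1-Q))^2 := by rw [← hM]
    _ = frob (M*Q)^2 + 2 * finner (M*Q) (M*(1-Q)) + frob (M*(1-Q))^2 := frob_add_sq _ _
    _ = frob (M*Q)^2 + frob (M*(1-Q))^2 := by rw [hcross]; ring

lemma pyth_row (M : Matrix (Fin m) (Fin n) ℝ) (P : Matrix (Fin m) (Fin m) ℝ)
    (hs : Pᵀ = P) (hi : P * P = P) :
    frob M ^2 = frob (P*M)^2 + frob ((1-P)*M)^2 := by
  have h := pyth_col Mᵀ P hs hi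
  rw [frob_transpose] at h
  rw [h]
  congr 1
  · rw [← frob_transpose (P*M), Matrix.transpose_mul, hs]
  · rw [← frob_transpose ((1-P)*M), Matrix.transpose_mul]
    congr 2
    rw [Matrix.transpose_sub, Matrix.transpose_one, hs]

lemma resid_eq (Dm : Matrix (Fin m) (Fin n) ℝ) (P : Matrix (Fin m) (Fin m) ℝ)
    (Q : Matrix (Fin n) (Fin n) ℝ) :
    Dm - (P * Dm + Dm * Q - P * Dm * Q) = (1 - P) * Dm * (1 - Q) := by
  simp only [Matrix.sub_mul, Matrix.mul_sub, Matrix.one_mul, Matrix.mul_one]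
  abel

end RPCAAux


/-- tangent-space approximation at `L*`. -/
theorem tangent_approx_at_Lstar
    {n₁ n₂ r : ℕ} (hr : 0 < r) (a : ℝ)
    (L Lstar : Matrix (Fin n₁) (Fin n₂) ℝ)
    (U : Matrix (Fin n₁) (Fin r) ℝ) (s : Fin r → ℝ) (V : Matrix (Fin n₂) (Fin r) ℝ)
    (hSVD : RPCA.IsThinSVD L U s V)
    (Ustar : Matrix (Fin n₁) (Fin r) ℝ) (sstar : Fin r → ℝ)
    (Vstar : Matrix (Fin n₂) (Fin r) ℝ)
    (hSVDstar : RPCA.IsThinSVD Lstar Ustar sstar Vstar)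
    (ha : RPCA.frob (L - Lstar) = a * sstar ⟨r - 1, Nat.sub_lt hr Nat.one_pos⟩)
    (ha1 : a ≤ 1) :
    RPCA.frob ((L - Lstar) - RPCA.tangentProj Ustar Vstar (L - Lstar)) ≤
      a / 2 * RPCA.frob (L - Lstar) := by

  obtain ⟨hU, hV, -, -, hL⟩ := hSVD
  obtain ⟨hUs, hVs, hantis, hposs, hLs⟩ := hSVDstar
  set σ : ℝ := sstar ⟨r - 1, Nat.sub_lt hr Nat.one_pos⟩ with hσdef
  have hσ : 0 < σ := by rw [hσdef]; exact hposs _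
  set D : Matrix (Fin n₁) (Fin n₂) ℝ := L - Lstar with hDdef
  set P : Matrix (Fin n₁) (Fin n₁) ℝ := Ustar * Ustarᵀ with hPdef
  set Q : Matrix (Fin n₂) (Fin n₂) ℝ := Vstar * Vstarᵀ with hQdef
  set Q' : Matrix (Fin n₂) (Fin n₂) ℝ := V * Vᵀ with hQ'def
  have hPs : Pᵀ = P := by rw [hPdef, Matrix.transpose_mul, Matrix.transpose_transpose]
  have hPi : P * P = P := by
    rw [hPdef, Matrix.mul_assoc, ← Matrix.mul_assoc Ustarᵀ, hUs, Matrix.one_mul]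
  have hQs : Qᵀ = Q := by rw [hQdef, Matrix.transpose_mul, Matrix.transpose_transpose]
  have hQi : Q * Q = Q := by
    rw [hQdef, Matrix.mul_assoc, ← Matrix.mul_assoc Vstarᵀ, hVs, Matrix.one_mul]
  have hQ's : Q'ᵀ = Q' := by rw [hQ'def, Matrix.transpose_mul, Matrix.transpose_transpose]
  have hQ'i : Q' * Q' = Q' := by
    rw [hQ'def, Matrix.mul_assoc, ← Matrix.mul_assoc Vᵀ, hV, Matrix.one_mul]
  have hPL : P * Lstar = Lstar := by
    rw [hLs, hPdef]
    have h : Ustarᵀ * (Ustar * (Matrix.diagonal sstar * Vstarᵀ)) =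
        Matrix.diagonal sstar * Vstarᵀ := by
      rw [← Matrix.mul_assoc, hUs, Matrix.one_mul]
    simp only [Matrix.mul_assoc, h]
  have hLQ : L * Q' = L := by
    rw [hL, hQ'def]
    have h : Vᵀ * (V * Vᵀ) = Vᵀ := by
      rw [← Matrix.mul_assoc, hV, Matrix.one_mul]
    simp only [Matrix.mul_assoc, h]
  have hDQ : D * (1 - Q') = -(Lstar * (1 - Q')) := by
    rw [hDdef, Matrix.sub_mul, Matrix.mul_sub, Matrix.mul_one, hLQ, sub_self, zero_sub]
  have hPDQ : P * (D * (1 - Q')) = D * (1 - Q') := by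
    rw [hDQ, Matrix.mul_neg, ← Matrix.mul_assoc, hPL]
  have e1 : D - RPCA.tangentProj Ustar Vstar D = (1 - P) * D * (1 - Q) :=
    RPCAAux.resid_eq D P Q
  clear_value σ D P Q Q'
  -- the residual as a product
  have hZ : D - RPCA.tangentProj Ustar Vstar D = ((1 - P) * D * V) * (Vᵀ * (1 - Q)) := by
    have key : (1 - P) * D = (1 - P) * (D * Q') := by
      have hp0 : (1 - P) * P = 0 := by
        rw [Matrix.sub_mul, Matrix.one_mul, hPi, sub_self]
      have h0 : (1 - P) * (D * (1 - Q')) = 0 := by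
        rw [← hPDQ, ← Matrix.mul_assoc, hp0, Matrix.zero_mul]
      have : (1 - P) * D - (1 - P) * (D * Q') = (1 - P) * (D * (1 - Q')) := by
        rw [Matrix.mul_sub, Matrix.mul_sub, Matrix.mul_one]
      exact sub_eq_zero.mp (this.trans h0)
    rw [e1]
    conv_lhs => rw [key, hQ'def]
    simp only [Matrix.mul_assoc]
  rw [hZ]
  -- quantities
  have hx0 : (0:ℝ) ≤ RPCA.frob ((1 - P) * D) := RPCAAux.frob_nonneg _
  have hxA : RPCA.frob ((1 - P) * D * V) ≤ RPCA.frob ((1 - P) * D) := by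
    have h1 : RPCA.frob ((1 - P) * D * V) = RPCA.frob ((1 - P) * D * Q') := by
      rw [← RPCAAux.frob_mul_orthright ((1 - P) * D * V) V hV]
      congr 1
      rw [hQ'def, ← Matrix.mul_assoc]
    have hp := RPCAAux.pyth_col ((1 - P) * D) Q' hQ's hQ'i
    refine RPCAAux.le_of_sq_le_sq hx0 ?_ (RPCAAux.frob_nonneg _)
    rw [h1]
    linarith [sq_nonneg (RPCA.frob ((1 - P) * D * (1 - Q')))]
  -- frob of Vᵀ and Vstarᵀ
  have hfV : RPCA.frob (Vᵀ) ^ 2 = (r : ℝ) := by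
    rw [RPCAAux.frob_sq]
    calc ∑ k, ∑ j, ((Vᵀ) k j)^2 = ∑ k : Fin r, (Vᵀ * V) k k := by
          refine Finset.sum_congr rfl fun k _ => ?_
          rw [Matrix.mul_apply]
          refine Finset.sum_congr rfl fun j _ => ?_
          rw [sq]; rfl
      _ = (r : ℝ) := by rw [hV]; simp [Matrix.one_apply]
  have hfVs : RPCA.frob (Vstarᵀ) ^ 2 = (r : ℝ) := by
    rw [RPCAAux.frob_sq]
    calc ∑ k, ∑ j, ((Vstarᵀ) k j)^2 = ∑ k : Fin r, (Vstarᵀ * Vstar) k k := by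
          refine Finset.sum_congr rfl fun k _ => ?_
          rw [Matrix.mul_apply]
          refine Finset.sum_congr rfl fun j _ => ?_
          rw [sq]; rfl
      _ = (r : ℝ) := by rw [hVs]; simp [Matrix.one_apply]
  -- the two sine quantities agree
  have hNN' : RPCA.frob (Vᵀ * (1 - Q)) = RPCA.frob (Vstarᵀ * (1 - Q')) := by
    have h1 : RPCA.frob (Vᵀ * (1 - Q)) ^ 2 = (r : ℝ) - RPCA.frob (Vᵀ * Vstar) ^ 2 := by
      have hp := RPCAAux.pyth_col Vᵀ Q hQs hQi
      have h2 : RPCA.frob (Vᵀ * Q) = RPCA.frob (Vᵀ * Vstar) := by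
        rw [hQdef, ← Matrix.mul_assoc, RPCAAux.frob_mul_orthright _ Vstar hVs]
      rw [hfV, h2] at hp
      linarith
    have h2 : RPCA.frob (Vstarᵀ * (1 - Q')) ^ 2 = (r : ℝ) - RPCA.frob (Vstarᵀ * V) ^ 2 := by
      have hp := RPCAAux.pyth_col Vstarᵀ Q' hQ's hQ'i
      have h3 : RPCA.frob (Vstarᵀ * Q') = RPCA.frob (Vstarᵀ * V) := by
        rw [hQ'def, ← Matrix.mul_assoc, RPCAAux.frob_mul_orthright _ V hV]
      rw [hfVs, h3] at hp
      linarith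
    have h3 : RPCA.frob (Vᵀ * Vstar) = RPCA.frob (Vstarᵀ * V) := by
      rw [← RPCAAux.frob_transpose (Vstarᵀ * V), Matrix.transpose_mul,
        Matrix.transpose_transpose]
    refine RPCAAux.le_of_sq_le_sq (RPCAAux.frob_nonneg _) ?_ (RPCAAux.frob_nonneg _)
      |>.antisymm ?_
    · rw [h1, h2, h3]
    · refine RPCAAux.le_of_sq_le_sq (RPCAAux.frob_nonneg _) ?_ (RPCAAux.frob_nonneg _)
      rw [h1, h2, h3]
  -- lower bound on y
  have hy_eq : RPCA.frob (D * (1 - Q')) =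
      RPCA.frob (Matrix.diagonal sstar * (Vstarᵀ * (1 - Q'))) := by
    rw [hDQ, RPCAAux.frob_neg, hLs]
    have : Ustar * Matrix.diagonal sstar * Vstarᵀ * (1 - Q') =
        Ustar * (Matrix.diagonal sstar * (Vstarᵀ * (1 - Q'))) := by
      rw [Matrix.mul_assoc, Matrix.mul_assoc]
    rw [this, RPCAAux.frob_mul_orthleft _ Ustar hUs]
  have hσN : σ * RPCA.frob (Vstarᵀ * (1 - Q')) ≤ RPCA.frob (D * (1 - Q')) := by
    refine RPCAAux.le_of_sq_le_sq (RPCAAux.frob_nonneg _) ?_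
      (mul_nonneg hσ.le (RPCAAux.frob_nonneg _))
    rw [mul_pow, hy_eq, RPCAAux.frob_sq, RPCAAux.frob_sq, Finset.mul_sum]
    refine Finset.sum_le_sum fun k _ => ?_
    rw [Finset.mul_sum]
    refine Finset.sum_le_sum fun j _ => ?_
    have hk : σ ≤ sstar k := by
      rw [hσdef]
      refine hantis (Fin.le_def.mpr ?_)
      show k.val ≤ r - 1
      have hkl := k.isLt
      omega
    rw [Matrix.diagonal_mul, mul_pow]
    exact mul_le_mul_of_nonneg_right (pow_le_pow_left₀ hσ.le hk 2) (sq_nonneg _)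
  -- y ≤ frob (P * D)
  have hyP : RPCA.frob (D * (1 - Q')) ≤ RPCA.frob (P * D) := by
    have h1 : RPCA.frob (D * (1 - Q')) = RPCA.frob ((P * D) * (1 - Q')) := by
      congr 1
      rw [Matrix.mul_assoc, hPDQ]
    have hp := RPCAAux.pyth_col (P * D) Q' hQ's hQ'i
    refine RPCAAux.le_of_sq_le_sq (RPCAAux.frob_nonneg _) ?_ (RPCAAux.frob_nonneg _)
    rw [h1]
    linarith [sq_nonneg (RPCA.frob ((P * D) * Q'))]
  -- Pythagoras for rows
  have hpy : RPCA.frob D ^ 2 = RPCA.frob (P * D) ^ 2 + RPCA.frob ((1 - P) * D) ^ 2 :=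
    RPCAAux.pyth_row D P hPs hPi
  -- assemble
  have hT : RPCA.frob (((1 - P) * D * V) * (Vᵀ * (1 - Q))) ≤
      RPCA.frob ((1 - P) * D) * RPCA.frob (Vᵀ * (1 - Q)) :=
    (RPCAAux.frob_mul_le _ _).trans
      (mul_le_mul_of_nonneg_right hxA (RPCAAux.frob_nonneg _))
  have hfD : RPCA.frob D = a * σ := ha
  have hy0 : (0:ℝ) ≤ RPCA.frob (D * (1 - Q')) := RPCAAux.frob_nonneg _
  have hpd0 : (0:ℝ) ≤ RPCA.frob (P * D) := RPCAAux.frob_nonneg _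
  have hn0 : (0:ℝ) ≤ RPCA.frob (Vᵀ * (1 - Q)) := RPCAAux.frob_nonneg _
  rw [hNN'] at hT
  -- now: T ≤ x * nN', σ * nN' ≤ y, y ≤ pd, x² + pd² = (aσ)²
  set T := RPCA.frob (((1 - P) * D * V) * (Vᵀ * (1 - Q)))
  set x := RPCA.frob ((1 - P) * D)
  set nn := RPCA.frob (Vstarᵀ * (1 - Q'))
  set yy := RPCA.frob (D * (1 - Q'))
  set pd := RPCA.frob (P * D)
  have hT0 : (0:ℝ) ≤ T := RPCAAux.frob_nonneg _
  have hnn0 : (0:ℝ) ≤ nn := RPCAAux.frob_nonneg _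
  clear_value T x nn yy pd
  have hTσ : T * σ ≤ x * yy := by
    calc T * σ ≤ (x * nn) * σ := mul_le_mul_of_nonneg_right hT hσ.le
      _ = x * (σ * nn) := by ring
      _ ≤ x * yy := mul_le_mul_of_nonneg_left hσN hx0
  have h3 : x * yy ≤ (x^2 + yy^2)/2 := by linarith [two_mul_le_add_sq x yy]
  have h4 : yy^2 ≤ pd^2 := pow_le_pow_left₀ hy0 hyP 2
  have h5 : x^2 + pd^2 = (a*σ)^2 := by rw [← hfD]; linarith [hpy]
  have hfin : T * σ ≤ (a*σ)^2/2 := by linarith [hTσ, h3, h4, h5]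
  rw [hfD, ← mul_le_mul_iff_of_pos_right hσ]
  calc T * σ ≤ (a*σ)^2/2 := hfin
    _ = a/2*(a*σ)*σ := by ring
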